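/- There is an absolute constant K > 0 such that for every integer k ≥ 1, |2√π · k^{3/2} · c_k − 1| ≤ K/k; in other words, c_k = (1/(2√π)) · k^{−3/2} · (1 + O(1/k)). -/

import Mathlib

/-- Taylor coefficients of `arcsin`: `c_k = (2k)! / (4^k (k!)^2 (2k+1))`. -/
noncomputable def arcsinCoeff (k : ℕ) : ℝ :=
  (Nat.factorial (2 * k) : ℝ) / (4 ^ k * (Nat.factorial k : ℝ) ^ 2 * (2 * k + 1))

set_option maxHeartbeats 1600000 in
/-- There is an absolute constant `K > 0` such that for every integer `k ≥ 1`,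
`|2√π · k^{3/2} · c_k − 1| ≤ K/k`, i.e. `c_k = (1/(2√π)) · k^{-3/2} · (1 + O(1/k))`. -/
theorem arcsinCoeff_asymptotics :
    ∃ K : ℝ, K > 0 ∧ ∀ k : ℕ, 1 ≤ k →
      |2 * Real.sqrt Real.pi * (k : ℝ) ^ ((3 : ℝ) / 2) * arcsinCoeff k - 1| ≤ K / k := by
  refine ⟨3, by norm_num, fun k hk => ?_⟩
  have hn1 : (1 : ℝ) ≤ (k : ℝ) := by exact_mod_cast hk
  set n : ℝ := (k : ℝ) with hn
  have hn0 : (0 : ℝ) < n := by linarith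
  clear_value n
  set A : ℝ := (Nat.factorial (2 * k) : ℝ) / (4 ^ k * (Nat.factorial k : ℝ) ^ 2) with hA
  have hfac1 : (0 : ℝ) < (Nat.factorial (2 * k) : ℝ) := by positivity
  have hfac2 : (0 : ℝ) < (Nat.factorial k : ℝ) := by positivity
  have h4 : (0 : ℝ) < (4 : ℝ) ^ k := by positivity
  have hApos : 0 < A := by positivity
  have hD : (0 : ℝ) < 2 * n + 1 := by linarith
  have h2n2 : (0 : ℝ) < 2 * n + 2 := by linarith
  -- arcsinCoeff k = A / (2n+1)
  have hcoeff : arcsinCoeff k = A / (2 * n + 1) := by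
    rw [arcsinCoeff, hA, hn]
    push_cast
    field_simp
  -- Wallis product identity
  have hWpos := Real.Wallis.W_pos k
  have hWle := Real.Wallis.W_le k
  have hleW := Real.Wallis.le_W k
  rw [← hn] at hleW
  have hWeq := Real.Wallis.W_eq_factorial_ratio k
  have hkey : A ^ 2 * (2 * n + 1) * Real.Wallis.W k = 1 := by
    rw [hWeq, hA, hn]
    have h24 : ((2 : ℝ)) ^ (4 * k) = ((4 : ℝ) ^ k) ^ 2 := by
      rw [← pow_mul, show k * 2 = 2 * k by ring, pow_mul, pow_mul]
      norm_num
    push_cast [h24]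
    field_simp
  have hpi := Real.pi_pos
  clear_value A
  clear hA hWeq
  have hA2 : (0 : ℝ) < A ^ 2 := by positivity
  -- lower bound: 2 ≤ π (2n+1) A²
  have hlow : 2 ≤ Real.pi * (2 * n + 1) * A ^ 2 := by
    have h1 : A ^ 2 * (2 * n + 1) * Real.Wallis.W k ≤ A ^ 2 * (2 * n + 1) * (Real.pi / 2) := by
      apply mul_le_mul_of_nonneg_left hWle
      positivity
    rw [hkey] at h1
    nlinarith
  -- upper bound: π (2n+1)² A² ≤ 2 (2n+2)
  have hleW' : (2 * n + 1) * (Real.pi / 2) ≤ Real.Wallis.W k * (2 * n + 2) := by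
    rw [div_mul_eq_mul_div, div_le_iff₀ h2n2] at hleW
    exact hleW
  have hhigh : Real.pi * (2 * n + 1) ^ 2 * A ^ 2 ≤ 2 * (2 * n + 2) := by
    have h1 : A ^ 2 * (2 * n + 1) * ((2 * n + 1) * (Real.pi / 2))
        ≤ A ^ 2 * (2 * n + 1) * (Real.Wallis.W k * (2 * n + 2)) := by
      apply mul_le_mul_of_nonneg_left hleW'
      positivity
    nlinarith [hkey]
  -- the quantity T
  set t : ℝ := n ^ ((3 : ℝ) / 2) with ht
  have ht0 : 0 ≤ t := Real.rpow_nonneg hn0.le _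
  have ht2 : t ^ 2 = n ^ 3 := by
    rw [ht, ← Real.rpow_natCast (n ^ ((3:ℝ)/2)) 2, ← Real.rpow_mul hn0.le]
    norm_num
  clear_value t
  set T : ℝ := 2 * Real.sqrt Real.pi * t * (A / (2 * n + 1)) with hT
  have hT0 : 0 ≤ T := by
    rw [hT]
    have := Real.sqrt_nonneg Real.pi
    positivity
  have hsq : Real.sqrt Real.pi ^ 2 = Real.pi := Real.sq_sqrt hpi.le
  have hT2 : T ^ 2 * (2 * n + 1) ^ 2 = 4 * Real.pi * n ^ 3 * A ^ 2 := by
    have h : T ^ 2 = 4 * Real.sqrt Real.pi ^ 2 * t ^ 2 * A ^ 2 / (2 * n + 1) ^ 2 := by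
      rw [hT]; field_simp; linear_combination (0 : ℝ) * hsq
    rw [h, hsq, ht2]
    field_simp
  clear_value T
  -- T² ≤ 1
  have e1 : T ^ 2 * (2 * n + 1) ^ 4 = 4 * n ^ 3 * (Real.pi * (2 * n + 1) ^ 2 * A ^ 2) := by
    linear_combination (2 * n + 1) ^ 2 * hT2
  have hTle1sq : T ^ 2 * (2 * n + 1) ^ 4 ≤ 8 * n ^ 3 * (2 * n + 2) := by
    have h := mul_le_mul_of_nonneg_left hhigh (by positivity : (0:ℝ) ≤ 4 * n ^ 3)
    rw [e1]; linarith
  have hstep : 8 * n ^ 3 * (2 * n + 2) ≤ (2 * n + 1) ^ 4 := by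
    nlinarith [pow_nonneg hn0.le 3, pow_nonneg hn0.le 2, hn0.le]
  have hT2le1 : T ^ 2 ≤ 1 := by
    have h := hTle1sq.trans hstep
    have hD4 : (0 : ℝ) < (2 * n + 1) ^ 4 := by positivity
    by_contra hc
    push_neg at hc
    have h1 := mul_lt_mul_of_pos_right hc hD4
    rw [one_mul] at h1
    linarith
  have hTle1 : T ≤ 1 := by
    by_contra hc
    push_neg at hc
    have h1 : (1:ℝ) * 1 < T * T := mul_lt_mul'' hc hc (by norm_num) (by norm_num)
    nlinarith [h1, hT2le1]
  -- lower bound on T²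
  have e2 : T ^ 2 * (2 * n + 1) ^ 3 = 4 * n ^ 3 * (Real.pi * (2 * n + 1) * A ^ 2) := by
    linear_combination (2 * n + 1) * hT2
  have hlow2 : 8 * n ^ 3 ≤ T ^ 2 * (2 * n + 1) ^ 3 := by
    have h := mul_le_mul_of_nonneg_left hlow (by positivity : (0:ℝ) ≤ 4 * n ^ 3)
    rw [e2]; linarith
  -- n (1 - T²) ≤ 3
  have hfinal : n * (1 - T ^ 2) ≤ 3 := by
    have hD3 : (0 : ℝ) < (2 * n + 1) ^ 3 := by positivity
    have h := mul_le_mul_of_nonneg_left hlow2 hn0.le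
    have hpoly : n * (2 * n + 1) ^ 3 - 8 * n ^ 4 ≤ 3 * (2 * n + 1) ^ 3 := by
      nlinarith [pow_nonneg hn0.le 3, pow_nonneg hn0.le 2, hn0.le]
    by_contra hc
    push_neg at hc
    have h1 := mul_lt_mul_of_pos_right hc hD3
    nlinarith [h1, h, hpoly]
  -- conclude
  have hgoal : |T - 1| ≤ 3 / n := by
    rw [abs_sub_le_iff]
    constructor
    · have : (0:ℝ) ≤ 3 / n := by positivity
      linarith
    · rw [le_div_iff₀ hn0]
      nlinarith [mul_nonneg (mul_nonneg hn0.le hT0) (sub_nonneg.mpr hTle1)]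
  rw [hcoeff, ← hT]
  exact hgoal
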